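/- arXiv:math/0403043 — 3 statements merged into one kernel-verified Lean document; each statement's English description precedes it below -/
import Mathlib

section
/- There exists a constant c₁ > 0 such that for every monic polynomial P ∈ ℂ[X] and every compact set B ⊆ ℂ with Lebesgue measure μ(B) ≥ c₁, one has ∫_B log|P(z)| dμ(z) ≥ deg P. -/
open MeasureTheory Set Real Metric Filter
lemma lint_inv_ball (w : ℂ) :
    ∫⁻ z in Metric.ball w 1, ENNReal.ofReal ‖z - w‖⁻¹ ≤ ENNReal.ofReal (2 * π) := by
  have hmeas : Measurable fun z : ℂ => ‖z - w‖⁻¹ := by fun_prop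
  rw [lintegral_eq_lintegral_meas_le _ (ae_of_all _ fun z => by positivity)
    hmeas.aemeasurable]
  set μ := volume.restrict (Metric.ball w 1) with hμ
  set f := fun t : ℝ => μ {a : ℂ | t ≤ ‖a - w‖⁻¹} with hf
  have part1 : ∫⁻ t in Ioc (0:ℝ) 1, f t ≤ ENNReal.ofReal π := by
    have hb : ∀ t : ℝ, f t ≤ ENNReal.ofReal π := by
      intro t
      calc f t ≤ μ univ := measure_mono (subset_univ _)
        _ ≤ volume (Metric.ball w 1) := by
            rw [hμ, Measure.restrict_apply MeasurableSet.univ, univ_inter]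
        _ = ENNReal.ofReal π := by
            rw [Complex.volume_ball, ← NNReal.coe_real_pi, ENNReal.ofReal_coe_nnreal]
            simp
    calc ∫⁻ t in Ioc (0:ℝ) 1, f t ≤ ∫⁻ _ in Ioc (0:ℝ) 1, ENNReal.ofReal π :=
          lintegral_mono fun t => hb t
      _ = ENNReal.ofReal π := by
          rw [setLIntegral_const, Real.volume_Ioc]
          norm_num
  have part2 : ∫⁻ t in Ioi (1:ℝ), f t ≤ ENNReal.ofReal π := by
    have h1 : ∀ t ∈ Ioi (1:ℝ), f t ≤ ENNReal.ofReal π * ENNReal.ofReal (t ^ (-2:ℝ)) := by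
      intro t ht
      rw [mem_Ioi] at ht
      have ht0 : (0:ℝ) < t := lt_trans one_pos ht
      have hsub : {a : ℂ | t ≤ ‖a - w‖⁻¹} ⊆ Metric.closedBall w t⁻¹ := by
        intro a ha
        simp only [mem_setOf_eq] at ha
        rw [Metric.mem_closedBall, dist_eq_norm]
        rcases eq_or_ne (a - w) 0 with h | h
        · rw [h]; simpa using (by positivity : (0:ℝ) ≤ t⁻¹)
        · have hpos : 0 < ‖a - w‖ := norm_pos_iff.mpr h
          rw [le_inv_comm₀ ht0 hpos] at ha
          exact ha
      calc f t ≤ μ (Metric.closedBall w t⁻¹) := measure_mono hsub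
        _ ≤ volume (Metric.closedBall w t⁻¹) := by
            rw [hμ]; exact Measure.restrict_le_self _
        _ = ENNReal.ofReal π * ENNReal.ofReal (t ^ (-2:ℝ)) := by
            rw [Complex.volume_closedBall, ← ENNReal.ofReal_pow (by positivity),
              ← NNReal.coe_real_pi, ENNReal.ofReal_coe_nnreal, mul_comm]
            congr 1
            rw [inv_pow, ← Real.rpow_natCast t 2, ← Real.rpow_neg ht0.le]
            norm_num
    calc ∫⁻ t in Ioi (1:ℝ), f t
        ≤ ∫⁻ t in Ioi (1:ℝ), ENNReal.ofReal π * ENNReal.ofReal (t ^ (-2:ℝ)) :=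
          setLIntegral_mono (by fun_prop) h1
      _ = ENNReal.ofReal π * ∫⁻ t in Ioi (1:ℝ), ENNReal.ofReal (t ^ (-2:ℝ)) :=
          lintegral_const_mul _ (by fun_prop)
      _ ≤ ENNReal.ofReal π := by
          have : ∫⁻ t in Ioi (1:ℝ), ENNReal.ofReal (t ^ (-2:ℝ)) = 1 := by
            rw [← ofReal_integral_eq_lintegral_ofReal
              (integrableOn_Ioi_rpow_of_lt (by norm_num) one_pos)
              ((ae_restrict_mem measurableSet_Ioi).mono fun t ht =>
                Real.rpow_nonneg (le_of_lt (lt_trans one_pos ht)) _)]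
            rw [integral_Ioi_rpow_of_lt (by norm_num) one_pos]
            norm_num
          rw [this, mul_one]
  calc ∫⁻ t in Ioi (0:ℝ), f t
      ≤ ∫⁻ t in Ioc (0:ℝ) 1 ∪ Ioi 1, f t := lintegral_mono_set Ioi_subset_Ioc_union_Ioi
    _ ≤ (∫⁻ t in Ioc (0:ℝ) 1, f t) + ∫⁻ t in Ioi 1, f t := lintegral_union_le _ _ _
    _ ≤ ENNReal.ofReal π + ENNReal.ofReal π := add_le_add part1 part2
    _ = ENNReal.ofReal (2 * π) := by
        rw [← ENNReal.ofReal_add pi_pos.le pi_pos.le]; ring_nf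

lemma integrableOn_inv_ball (w : ℂ) :
    IntegrableOn (fun z : ℂ => ‖z - w‖⁻¹) (Metric.ball w 1) := by
  constructor
  · exact (Measurable.aestronglyMeasurable (by fun_prop))
  · rw [hasFiniteIntegral_iff_norm]
    have : ∀ z : ℂ, ENNReal.ofReal ‖‖z - w‖⁻¹‖ = ENNReal.ofReal ‖z - w‖⁻¹ := by
      intro z; rw [Real.norm_eq_abs, abs_of_nonneg (by positivity)]
    simp_rw [this]
    exact lt_of_le_of_lt (lint_inv_ball w) ENNReal.ofReal_lt_top

lemma int_inv_ball_le (w : ℂ) : ∫ z in Metric.ball w 1, ‖z - w‖⁻¹ ≤ 2 * π := by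
  rw [MeasureTheory.integral_eq_lintegral_of_nonneg_ae
    (ae_of_all _ fun z => by positivity) (Measurable.aestronglyMeasurable (by fun_prop))]
  calc (∫⁻ z in Metric.ball w 1, ENNReal.ofReal ‖z - w‖⁻¹).toReal
      ≤ (ENNReal.ofReal (2 * π)).toReal :=
        ENNReal.toReal_mono ENNReal.ofReal_ne_top (lint_inv_ball w)
    _ = 2 * π := ENNReal.toReal_ofReal (by positivity)

lemma neg_inv_le_log {x : ℝ} (hx : 0 ≤ x) : -x⁻¹ ≤ Real.log x := by
  rcases eq_or_lt_of_le hx with h | h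
  · simp [← h]
  · have h1 : Real.log x⁻¹ ≤ x⁻¹ - 1 := Real.log_le_sub_one_of_pos (by positivity)
    rw [Real.log_inv] at h1
    linarith

lemma abs_log_le {x : ℝ} (hx : 0 ≤ x) : |Real.log x| ≤ x⁻¹ + x := by
  rcases eq_or_lt_of_le hx with h | h
  · simp [← h]
  · have h1 : Real.log x ≤ x - 1 := Real.log_le_sub_one_of_pos h
    have h2 : -x⁻¹ ≤ Real.log x := _root_.neg_inv_le_log hx
    have h3 : (0:ℝ) ≤ x⁻¹ := by positivity
    rw [abs_le]
    constructor <;> linarith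

lemma integrableOn_log_compact {B : Set ℂ} (hB : IsCompact B) (a : ℂ) :
    IntegrableOn (fun z : ℂ => Real.log ‖z - a‖) B := by
  have hBm : MeasurableSet B := hB.isClosed.measurableSet
  have hmeas : Measurable fun z : ℂ => Real.log ‖z - a‖ := Real.measurable_log.comp (by fun_prop)
  have h1 : IntegrableOn (fun z : ℂ => Real.log ‖z - a‖) (B ∩ Metric.ball a 1) := by
    have hg : IntegrableOn (fun z : ℂ => ‖z - a‖⁻¹ + 1) (B ∩ Metric.ball a 1) := by
      apply ((integrableOn_inv_ball a).mono_set inter_subset_right).add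
      refine integrableOn_const (ne_of_lt ?_)
      exact lt_of_le_of_lt (measure_mono inter_subset_right)
        (by rw [Complex.volume_ball]; exact ENNReal.mul_lt_top (by simp) ENNReal.coe_lt_top)
    refine hg.mono' hmeas.aestronglyMeasurable ?_
    filter_upwards [ae_restrict_mem (hBm.inter measurableSet_ball)] with z hz
    have hz1 : ‖z - a‖ < 1 := by
      have := hz.2; rwa [Metric.mem_ball, dist_eq_norm] at this
    calc ‖Real.log ‖z - a‖‖ = |Real.log ‖z - a‖| := rfl
      _ ≤ ‖z - a‖⁻¹ + ‖z - a‖ := _root_.abs_log_le (norm_nonneg _)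
      _ ≤ ‖z - a‖⁻¹ + 1 := by linarith
  have h2 : IntegrableOn (fun z : ℂ => Real.log ‖z - a‖) (B \ Metric.ball a 1) := by
    obtain ⟨R, hR⟩ := hB.isBounded.subset_closedBall a
    refine Measure.integrableOn_of_bounded
      (ne_of_lt (lt_of_le_of_lt (measure_mono diff_subset) hB.measure_lt_top))
      hmeas.aestronglyMeasurable (M := |R|) ?_
    filter_upwards [ae_restrict_mem (hBm.diff measurableSet_ball)] with z hz
    have hz1 : (1:ℝ) ≤ ‖z - a‖ := by
      have := hz.2; rw [Metric.mem_ball, dist_eq_norm, not_lt] at this; exact this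
    have hz2 : ‖z - a‖ ≤ R := by
      have := hR hz.1; rwa [Metric.mem_closedBall, dist_eq_norm] at this
    rw [Real.norm_eq_abs, abs_of_nonneg (Real.log_nonneg hz1)]
    calc Real.log ‖z - a‖ ≤ ‖z - a‖ - 1 :=
          Real.log_le_sub_one_of_pos (lt_of_lt_of_le one_pos hz1)
      _ ≤ |R| := by have := le_abs_self R; linarith
  have := h1.union h2
  rwa [inter_union_diff] at this

lemma root_bound {B : Set ℂ} (hB : IsCompact B)
    (hvol : ENNReal.ofReal (2 * π + π * Real.exp 1 ^ 2 + 1) ≤ volume B) (a : ℂ) :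
    (1:ℝ) ≤ ∫ z in B, Real.log ‖z - a‖ := by
  have hBm : MeasurableSet B := hB.isClosed.measurableSet
  set e := Real.exp 1 with he
  have hint : IntegrableOn (fun z : ℂ => Real.log ‖z - a‖) B := integrableOn_log_compact hB a
  have hint1 : IntegrableOn (fun z : ℂ => Real.log ‖z - a‖) (B ∩ Metric.ball a 1) :=
    hint.mono_set inter_subset_left
  have hint2 : IntegrableOn (fun z : ℂ => Real.log ‖z - a‖) (B \ Metric.ball a 1) :=
    hint.mono_set diff_subset
  -- split the integral
  have hsplit : ∫ z in B, Real.log ‖z - a‖ =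
      (∫ z in B ∩ Metric.ball a 1, Real.log ‖z - a‖) +
      ∫ z in B \ Metric.ball a 1, Real.log ‖z - a‖ := by
    rw [← setIntegral_union (disjoint_sdiff_self_right.mono_left inter_subset_right)
      (hBm.diff measurableSet_ball) hint1 hint2, inter_union_diff]
  -- inner part
  have h1 : -(2 * π) ≤ ∫ z in B ∩ Metric.ball a 1, Real.log ‖z - a‖ := by
    have hstep : ∫ z in B ∩ Metric.ball a 1, -‖z - a‖⁻¹ ≤
        ∫ z in B ∩ Metric.ball a 1, Real.log ‖z - a‖ := by
      refine setIntegral_mono_on (((integrableOn_inv_ball a).mono_set inter_subset_right).neg)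
        hint1 (hBm.inter measurableSet_ball) fun z _ => ?_
      exact _root_.neg_inv_le_log (norm_nonneg _)
    have hstep2 : ∫ z in B ∩ Metric.ball a 1, ‖z - a‖⁻¹ ≤ ∫ z in Metric.ball a 1, ‖z - a‖⁻¹ := by
      refine setIntegral_mono_set (integrableOn_inv_ball a)
        (ae_of_all _ fun z => by positivity) (HasSubset.Subset.eventuallyLE inter_subset_right)
    rw [integral_neg] at hstep
    have := int_inv_ball_le a
    linarith
  -- outer part
  have h2 : (volume (B \ Metric.ball a e)).toReal ≤
      ∫ z in B \ Metric.ball a 1, Real.log ‖z - a‖ := by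
    have hsub : B \ Metric.ball a e ⊆ B \ Metric.ball a 1 := by
      apply diff_subset_diff_right
      exact Metric.ball_subset_ball (by rw [he]; nlinarith [Real.exp_one_gt_d9])
    have hmono : ∫ z in B \ Metric.ball a e, Real.log ‖z - a‖ ≤
        ∫ z in B \ Metric.ball a 1, Real.log ‖z - a‖ := by
      refine setIntegral_mono_set hint2 ?_ (HasSubset.Subset.eventuallyLE hsub)
      filter_upwards [ae_restrict_mem (hBm.diff measurableSet_ball)] with z hz
      refine Real.log_nonneg ?_
      have := hz.2; rw [Metric.mem_ball, dist_eq_norm, not_lt] at this; exact this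
    have hconst : (volume (B \ Metric.ball a e)).toReal ≤
        ∫ z in B \ Metric.ball a e, Real.log ‖z - a‖ := by
      have hc : ∫ _ in B \ Metric.ball a e, (1:ℝ) = (volume (B \ Metric.ball a e)).toReal := by
        rw [setIntegral_const, smul_eq_mul, mul_one]; rfl
      rw [← hc]
      refine setIntegral_mono_on (integrableOn_const (ne_of_lt
        (lt_of_le_of_lt (measure_mono diff_subset) hB.measure_lt_top)))
        (hint.mono_set (hsub.trans diff_subset)) (hBm.diff measurableSet_ball) fun z hz => ?_
      have hze : e ≤ ‖z - a‖ := by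
        have := hz.2; rw [Metric.mem_ball, dist_eq_norm, not_lt] at this; exact this
      rw [Real.le_log_iff_exp_le (lt_of_lt_of_le (Real.exp_pos 1) hze)]
      exact hze
    linarith
  -- measure bound
  have h3 : 2 * π + 1 ≤ (volume (B \ Metric.ball a e)).toReal := by
    have hBfin : volume B ≠ ⊤ := hB.measure_lt_top.ne
    have hDfin : volume (B \ Metric.ball a e) ≠ ⊤ :=
      (lt_of_le_of_lt (measure_mono diff_subset) hB.measure_lt_top).ne
    have hballval : (volume (Metric.ball a e)).toReal = π * e ^ 2 := by
      rw [Complex.volume_ball, ENNReal.toReal_mul, ENNReal.toReal_pow,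
        ENNReal.toReal_ofReal (Real.exp_pos 1).le, ENNReal.coe_toReal, NNReal.coe_real_pi]
      ring
    have hle : volume B ≤ volume (B \ Metric.ball a e) + volume (Metric.ball a e) := by
      calc volume B ≤ volume ((B \ Metric.ball a e) ∪ Metric.ball a e) :=
            measure_mono (fun z hz => by
              by_cases h : z ∈ Metric.ball a e
              · exact Or.inr h
              · exact Or.inl ⟨hz, h⟩)
        _ ≤ _ := measure_union_le _ _
    have hballfin : volume (Metric.ball a e) ≠ ⊤ := by
      rw [Complex.volume_ball]
      exact (ENNReal.mul_lt_top (ENNReal.pow_lt_top ENNReal.ofReal_lt_top)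
        ENNReal.coe_lt_top).ne
    have ht1 : 2 * π + π * e ^ 2 + 1 ≤ (volume B).toReal := by
      calc 2 * π + π * e ^ 2 + 1 = (ENNReal.ofReal (2 * π + π * e ^ 2 + 1)).toReal := by
            rw [ENNReal.toReal_ofReal (by positivity)]
        _ ≤ (volume B).toReal := ENNReal.toReal_mono hBfin hvol
    have ht2 : (volume B).toReal ≤
        (volume (B \ Metric.ball a e)).toReal + (volume (Metric.ball a e)).toReal := by
      rw [← ENNReal.toReal_add hDfin hballfin]
      exact ENNReal.toReal_mono (by rw [ENNReal.add_ne_top]; exact ⟨hDfin, hballfin⟩) hle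
    rw [hballval] at ht2
    linarith
  rw [hsplit]
  linarith

lemma integrable_msum {s : Multiset ℂ} {μ : Measure ℂ}
    (h : ∀ a ∈ s, Integrable (fun z : ℂ => Real.log ‖z - a‖) μ) :
    Integrable (fun z : ℂ => (s.map fun a => Real.log ‖z - a‖).sum) μ := by
  induction s using Multiset.induction with
  | empty => simp [integrable_const]
  | cons b t ih =>
    simp only [Multiset.map_cons, Multiset.sum_cons]
    exact (h b (Multiset.mem_cons_self b t)).add
      (ih fun a ha => h a (Multiset.mem_cons_of_mem ha))

lemma integral_msum {s : Multiset ℂ} {μ : Measure ℂ}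
    (h : ∀ a ∈ s, Integrable (fun z : ℂ => Real.log ‖z - a‖) μ) :
    ∫ z, (s.map fun a => Real.log ‖z - a‖).sum ∂μ =
      (s.map fun a => ∫ z, Real.log ‖z - a‖ ∂μ).sum := by
  induction s using Multiset.induction with
  | empty => simp
  | cons b t ih =>
    simp only [Multiset.map_cons, Multiset.sum_cons]
    rw [integral_add (h b (Multiset.mem_cons_self b t))
      (integrable_msum fun a ha => h a (Multiset.mem_cons_of_mem ha)),
      ih fun a ha => h a (Multiset.mem_cons_of_mem ha)]

lemma log_abs_msum {s : Multiset ℂ} {z : ℂ} (h : ∀ a ∈ s, z ≠ a) :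
    Real.log ‖(s.map fun a => z - a).prod‖ = (s.map fun a => Real.log ‖z - a‖).sum := by
  induction s using Multiset.induction with
  | empty => simp
  | cons b t ih =>
    simp only [Multiset.map_cons, Multiset.prod_cons, Multiset.sum_cons, norm_mul]
    rw [Real.log_mul, ih fun a ha => h a (Multiset.mem_cons_of_mem ha)]
    · exact norm_ne_zero_iff.mpr (sub_ne_zero.mpr (h b (Multiset.mem_cons_self b t)))
    · refine norm_ne_zero_iff.mpr (Multiset.prod_ne_zero ?_)
      intro h0
      obtain ⟨a, ha, ha0⟩ := Multiset.mem_map.mp h0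
      exact h a (Multiset.mem_cons_of_mem ha) (sub_eq_zero.mp ha0)



/-- There is a constant `c₁ > 0` such that for every monic polynomial `P ∈ ℂ[X]` and every
compact set `B ⊆ ℂ` of Lebesgue measure at least `c₁`, the integral of `log |P(z)|` over `B`
is at least `deg P`. -/
theorem stmt_10 :
    ∃ c₁ : ℝ, 0 < c₁ ∧ ∀ P : Polynomial ℂ, P.Monic →
      ∀ B : Set ℂ, IsCompact B → ENNReal.ofReal c₁ ≤ MeasureTheory.volume B →
        (P.natDegree : ℝ) ≤ ∫ z in B, Real.log ‖P.eval z‖ := by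
  refine ⟨2 * π + π * Real.exp 1 ^ 2 + 1, by positivity, ?_⟩
  intro P hP B hBcomp hvol
  set s := P.roots with hs
  have hsplits : Polynomial.Splits P := IsAlgClosed.splits P
  have hfact : P = (s.map fun a => Polynomial.X - Polynomial.C a).prod :=
    hsplits.eq_prod_roots_of_monic hP
  have hcard : P.natDegree = Multiset.card s := by
    have := hsplits.natDegree_eq_card_roots
    exact this
  have heval : ∀ z : ℂ, P.eval z = (s.map fun a => z - a).prod := by
    intro z
    conv_lhs => rw [hfact]
    rw [Polynomial.eval_multiset_prod, Multiset.map_map]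
    congr 1
    ext a
    simp
  have hint : ∀ a : ℂ, IntegrableOn (fun z : ℂ => Real.log ‖z - a‖) B :=
    fun a => integrableOn_log_compact hBcomp a
  have hae : ∀ᵐ z ∂(volume.restrict B),
      Real.log ‖P.eval z‖ = (s.map fun a => Real.log ‖z - a‖).sum := by
    apply ae_restrict_of_ae
    have hnull : volume {z : ℂ | ¬ ∀ a ∈ s, z ≠ a} = 0 := by
      refine measure_mono_null (fun z hz => ?_) (Set.Finite.measure_zero
        (Set.finite_coe_iff.mp (by exact Set.Finite.to_subtype (s.toFinset : Finset ℂ).finite_toSet)) volume)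
      simp only [mem_setOf_eq, not_forall] at hz
      obtain ⟨a, ha, hza⟩ := hz
      simp only [not_not] at hza
      subst hza
      exact Multiset.mem_toFinset.mpr ha
    have : {z : ℂ | ¬ Real.log ‖P.eval z‖ =
        (s.map fun a => Real.log ‖z - a‖).sum} ⊆ {z : ℂ | ¬ ∀ a ∈ s, z ≠ a} := by
      intro z hz
      simp only [mem_setOf_eq] at hz ⊢
      intro hall
      apply hz
      rw [heval z]
      exact log_abs_msum hall
    exact measure_mono_null this hnull
  rw [show (∫ z in B, Real.log ‖P.eval z‖) = ∫ z in B, (s.map fun a => Real.log ‖z - a‖).sum from integral_congr_ae hae]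
  rw [integral_msum fun a _ => hint a]
  have hbound : ∀ x ∈ s.map fun a => ∫ z in B, Real.log ‖z - a‖, (1:ℝ) ≤ x := by
    intro x hx
    obtain ⟨a, _, rfl⟩ := Multiset.mem_map.mp hx
    exact root_bound hBcomp hvol a
  calc (P.natDegree : ℝ) = (Multiset.card s : ℝ) := by rw [hcard]
    _ = (Multiset.card (s.map fun a => ∫ z in B, Real.log ‖z - a‖) : ℝ) • (1:ℝ) := by
        rw [Multiset.card_map, smul_eq_mul, mul_one]
    _ ≤ (s.map fun a => ∫ z in B, Real.log ‖z - a‖).sum := by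
        rw [Nat.cast_smul_eq_nsmul]
        exact Multiset.card_nsmul_le_sum hbound
end

section
/- Let (P_n)_{n∈ℕ} be a sequence of monic polynomials in ℂ[X] whose degrees tend to infinity, and let ξ₁, …, ξ_m ∈ ℂ. Then there exists ξ ∈ ℂ, transcendental over the subfield ℚ(ξ₁, …, ξ_m), such that the sequence (|P_n(ξ)|)_n is unbounded in ℝ. -/
open MeasureTheory Set

lemma countable_alg (K : Type) [Field K] [Algebra K ℂ] [Countable K] :
    {z : ℂ | IsAlgebraic K z}.Countable := by
  have : Countable (Polynomial K) := by
    have e := (Polynomial.toFinsuppIso K).toEquiv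
    have : Countable (AddMonoidAlgebra K ℕ) := by exact Function.Injective.countable (f := fun p : AddMonoidAlgebra K ℕ => p.coeff) (by rintro ⟨a⟩ ⟨b⟩ h; cases h; rfl)
    exact Countable.of_equiv _ e.symm
  have hsub : {z : ℂ | IsAlgebraic K z} ⊆
      ⋃ p ∈ {p : Polynomial K | p ≠ 0}, {z : ℂ | Polynomial.aeval z p = 0} := by
    rintro z ⟨p, hp0, hpz⟩
    exact Set.mem_biUnion hp0 hpz
  refine Set.Countable.mono hsub ?_
  refine Set.Countable.biUnion (Set.to_countable _) ?_
  intro p hp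
  have hm : (p.map (algebraMap K ℂ)) ≠ 0 := by
    simpa [Polynomial.map_ne_zero_iff (algebraMap K ℂ).injective] using hp
  have hss : {z : ℂ | Polynomial.aeval z p = 0} ⊆ {z : ℂ | (p.map (algebraMap K ℂ)).IsRoot z} := by
    intro z hz
    simp only [Set.mem_setOf_eq, Polynomial.IsRoot, Polynomial.eval_map, ← Polynomial.aeval_def]
    exact hz
  exact ((Polynomial.finite_setOf_isRoot hm).subset hss).countable

example (m : ℕ) (ξ : Fin m → ℂ) : Countable ↥(IntermediateField.adjoin ℚ (Set.range ξ)) := by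
  have h := IntermediateField.cardinalMk_adjoin_le ℚ (Set.range ξ)
  rw [← Cardinal.mk_le_aleph0_iff]
  refine h.trans ?_
  simp only [sup_le_iff]
  refine ⟨⟨Cardinal.mk_le_aleph0, Cardinal.mk_le_aleph0⟩, le_rfl⟩

lemma intOn_rpow_abs (x c : ℝ) (hc : 0 ≤ c) :
    IntegrableOn (fun t => |t - x| ^ (-2⁻¹ : ℝ)) (Icc (x - c) (x + c)) volume := by
  have h0 : IntervalIntegrable (fun s : ℝ => s ^ (-2⁻¹ : ℝ)) volume 0 c :=
    intervalIntegral.intervalIntegrable_rpow' (by norm_num)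
  have hR : IntegrableOn (fun t => |t - x| ^ (-2⁻¹ : ℝ)) (Icc x (x + c)) volume := by
    have h1 : IntervalIntegrable (fun t : ℝ => (t - x) ^ (-2⁻¹ : ℝ)) volume x (x + c) := by
      simpa [add_comm] using h0.comp_sub_right x
    rw [intervalIntegrable_iff_integrableOn_Ioc_of_le (by linarith)] at h1
    rw [integrableOn_Icc_iff_integrableOn_Ioc]
    refine h1.congr_fun ?_ measurableSet_Ioc
    intro t ht
    show (t - x) ^ (-2⁻¹:ℝ) = |t - x| ^ (-2⁻¹:ℝ)
    rw [abs_of_nonneg (by linarith [ht.1] : (0:ℝ) ≤ t - x)]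
  have hL : IntegrableOn (fun t => |t - x| ^ (-2⁻¹ : ℝ)) (Icc (x - c) x) volume := by
    have h1 : IntervalIntegrable (fun t : ℝ => (x - t) ^ (-2⁻¹ : ℝ)) volume (x - 0) (x - c) :=
      h0.comp_sub_left x
    rw [sub_zero] at h1
    have h2 := h1.symm
    rw [intervalIntegrable_iff_integrableOn_Ioc_of_le (by linarith)] at h2
    rw [integrableOn_Icc_iff_integrableOn_Ioc]
    refine h2.congr_fun ?_ measurableSet_Ioc
    intro t ht
    show (x - t) ^ (-2⁻¹:ℝ) = |t - x| ^ (-2⁻¹:ℝ)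
    rw [abs_of_nonpos (by linarith [ht.2] : t - x ≤ (0:ℝ)), neg_sub]
  have := hL.union hR
  refine this.mono_set ?_
  intro t ht
  rcases le_total t x with h | h
  · exact Or.inl ⟨ht.1, h⟩
  · exact Or.inr ⟨h, ht.2⟩

lemma integrableOn_log_abs (x a b : ℝ) :
    IntegrableOn (fun t => Real.log |t - x|) (Icc a b) volume := by
  set R : ℝ := max |a - x| |b - x| + 1 with hRdef
  have hR1 : (1:ℝ) ≤ R := by
    have := abs_nonneg (a - x); have := le_max_left |a - x| |b - x|; simp only [hRdef]
    nlinarith [le_max_left |a - x| |b - x|, abs_nonneg (a-x)]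
  have hsub : Icc a b ⊆ Icc (x - R) (x + R) := by
    intro t ht
    have h1 : t - x ≤ b - x := by linarith [ht.2]
    have h2 : a - x ≤ t - x := by linarith [ht.1]
    have h3 : b - x ≤ |b - x| := le_abs_self _
    have h4 : -|a - x| ≤ a - x := neg_abs_le _
    have h5 := le_max_left |a - x| |b - x|
    have h6 := le_max_right |a - x| |b - x|
    constructor <;> simp only [hRdef] <;> linarith
  refine IntegrableOn.mono_set ?_ hsub
  have hg : IntegrableOn (fun t => R + 2 * |t - x| ^ (-2⁻¹ : ℝ)) (Icc (x - R) (x + R)) volume := by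
    refine Integrable.add ?_ ((intOn_rpow_abs x R (by linarith)).const_mul 2)
    exact integrableOn_const measure_Icc_lt_top.ne
  have hmeas : AEStronglyMeasurable (fun t => Real.log |t - x|)
      (volume.restrict (Icc (x - R) (x + R))) := by
    refine Measurable.aestronglyMeasurable ?_
    exact Real.measurable_log.comp (continuous_abs.comp (continuous_id.sub continuous_const)).measurable
  refine hg.mono' hmeas ?_
  refine (ae_restrict_iff' measurableSet_Icc).2 (Filter.Eventually.of_forall ?_)
  intro t ht
  set y : ℝ := |t - x| with hy
  have hy0 : 0 ≤ y := abs_nonneg _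
  have hyR : y ≤ R := by
    rcases le_total t x with h | h
    · rw [hy, abs_of_nonpos (by linarith : t - x ≤ 0)]; linarith [ht.1]
    · rw [hy, abs_of_nonneg (by linarith : 0 ≤ t - x)]; linarith [ht.2]
  rcases eq_or_lt_of_le hy0 with h0 | h0
  · rw [← h0]
    simp [Real.log_zero, Real.zero_rpow (by norm_num : (-2⁻¹ : ℝ) ≠ 0)]
    linarith
  · have hrpow_pos : 0 < y ^ (-2⁻¹ : ℝ) := Real.rpow_pos_of_pos h0 _
    rcases le_total 1 y with h1 | h1
    · have hlog0 : 0 ≤ Real.log y := Real.log_nonneg h1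
      rw [Real.norm_eq_abs, abs_of_nonneg hlog0]
      have : Real.log y ≤ Real.log R := Real.log_le_log h0 hyR
      have hlogR : Real.log R ≤ R - 1 := by
        have := Real.log_le_sub_one_of_pos (by linarith : (0:ℝ) < R); linarith
      nlinarith
    · have hlogneg : Real.log y ≤ 0 := Real.log_nonpos hy0 h1
      rw [Real.norm_eq_abs, abs_of_nonpos hlogneg]
      set u : ℝ := y ^ (-2⁻¹ : ℝ) with hu
      have hlogu : Real.log u = (-2⁻¹) * Real.log y := Real.log_rpow h0 _
      have : Real.log u ≤ u - 1 := Real.log_le_sub_one_of_pos hrpow_pos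
      nlinarith

lemma log_abs_ge (y : ℝ) : -(2 * |y| ^ (-2⁻¹ : ℝ)) ≤ Real.log |y| := by
  set s : ℝ := |y| with hs
  have hs0 : 0 ≤ s := abs_nonneg _
  rcases eq_or_lt_of_le hs0 with h0 | h0
  · rw [← h0]
    simp [Real.zero_rpow (by norm_num : (-2⁻¹ : ℝ) ≠ 0)]
  · set u : ℝ := s ^ (-2⁻¹ : ℝ) with hu
    have hupos : 0 < u := Real.rpow_pos_of_pos h0 _
    have hlogu : Real.log u = (-2⁻¹) * Real.log s := Real.log_rpow h0 _
    have h1 : Real.log u ≤ u - 1 := Real.log_le_sub_one_of_pos hupos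
    nlinarith

lemma rpow_ball_integral (x : ℝ) :
    ∫ t in Icc (x - 1) (x + 1), 2 * |t - x| ^ (-2⁻¹ : ℝ) = 8 := by
  have base : ∫ s in (0:ℝ)..1, s ^ (-2⁻¹ : ℝ) = 2 := by
    rw [integral_rpow (Or.inl (by norm_num))]
    norm_num [Real.zero_rpow (by norm_num : (2⁻¹ : ℝ)  ≠ 0)]
  have hIccIoc : ∫ t in Icc (x - 1) (x + 1), 2 * |t - x| ^ (-2⁻¹ : ℝ)
      = ∫ t in (x-1)..(x+1), 2 * |t - x| ^ (-2⁻¹ : ℝ) := by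
    rw [intervalIntegral.integral_of_le (by linarith), integral_Icc_eq_integral_Ioc]
  rw [hIccIoc]
  have hint1 : IntervalIntegrable (fun t => 2 * |t - x| ^ (-2⁻¹ : ℝ)) volume (x-1) x := by
    rw [intervalIntegrable_iff_integrableOn_Icc_of_le (by linarith)]
    exact IntegrableOn.mono_set ((intOn_rpow_abs x 1 one_pos.le).const_mul 2)
      (by intro t ht; exact ⟨ht.1, by linarith [ht.2]⟩)
  have hint2 : IntervalIntegrable (fun t => 2 * |t - x| ^ (-2⁻¹ : ℝ)) volume x (x+1) := by
    rw [intervalIntegrable_iff_integrableOn_Icc_of_le (by linarith)]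
    exact IntegrableOn.mono_set ((intOn_rpow_abs x 1 one_pos.le).const_mul 2)
      (by intro t ht; exact ⟨by linarith [ht.1], ht.2⟩)
  rw [← intervalIntegral.integral_add_adjacent_intervals hint1 hint2]
  have hleft : ∫ t in (x-1)..x, 2 * |t - x| ^ (-2⁻¹ : ℝ)
      = ∫ t in (x-1)..x, 2 * (x - t) ^ (-2⁻¹ : ℝ) := by
    refine intervalIntegral.integral_congr ?_
    intro t ht
    rw [uIcc_of_le (by linarith)] at ht
    have : t - x ≤ 0 := by linarith [ht.2]
    simp only [abs_of_nonpos this, neg_sub]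
  have hright : ∫ t in x..(x+1), 2 * |t - x| ^ (-2⁻¹ : ℝ)
      = ∫ t in x..(x+1), 2 * (t - x) ^ (-2⁻¹ : ℝ) := by
    refine intervalIntegral.integral_congr ?_
    intro t ht
    rw [uIcc_of_le (by linarith)] at ht
    have : 0 ≤ t - x := by linarith [ht.1]
    simp only [abs_of_nonneg this]
  rw [hleft, hright]
  have e1 : ∫ t in (x-1)..x, 2 * (x - t) ^ (-2⁻¹ : ℝ)
      = ∫ s in (0:ℝ)..1, 2 * s ^ (-2⁻¹ : ℝ) := by
    have := intervalIntegral.integral_comp_sub_left (a := x-1) (b := x)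
      (fun s => 2 * s ^ (-2⁻¹ : ℝ)) x
    simpa using this
  have e2 : ∫ t in x..(x+1), 2 * (t - x) ^ (-2⁻¹ : ℝ)
      = ∫ s in (0:ℝ)..1, 2 * s ^ (-2⁻¹ : ℝ) := by
    have := intervalIntegral.integral_comp_sub_right (a := x) (b := x+1)
      (fun s => 2 * s ^ (-2⁻¹ : ℝ)) x
    simpa using this
  rw [e1, e2, intervalIntegral.integral_const_mul, base]
  norm_num

lemma corelem (x : ℝ) (E : Set ℝ) (hme : MeasurableSet E) (hsub : E ⊆ Icc 0 100)
    (hvol : 90 ≤ (volume E).toReal) : 1 ≤ ∫ t in E, Real.log |t - x| := by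
  classical
  set f : ℝ → ℝ := fun t => Real.log |t - x| with hf
  have hIntIcc : IntegrableOn f (Icc 0 100) volume := integrableOn_log_abs x 0 100
  have hmeasf : Measurable f :=
    Real.measurable_log.comp (continuous_abs.comp (continuous_id.sub continuous_const)).measurable
  have hIntE : IntegrableOn f E volume := hIntIcc.mono_set hsub
  have hg : Measurable fun t : ℝ => |t - x| :=
    (continuous_abs.comp (continuous_id.sub continuous_const)).measurable
  set E1 : Set ℝ := E ∩ {t | |t - x| < 1} with hE1
  set E2 : Set ℝ := E ∩ {t | 1 ≤ |t - x| ∧ |t - x| < 40} with hE2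
  set E3 : Set ℝ := E ∩ {t | 40 ≤ |t - x|} with hE3
  have hmE1 : MeasurableSet E1 := hme.inter (hg measurableSet_Iio)
  have hmE2 : MeasurableSet E2 :=
    hme.inter ((hg measurableSet_Ici).inter (hg measurableSet_Iio))
  have hmE3 : MeasurableSet E3 := hme.inter (hg measurableSet_Ici)
  have hIntE1 : IntegrableOn f E1 volume := hIntE.mono_set inter_subset_left
  have hIntE2 : IntegrableOn f E2 volume := hIntE.mono_set inter_subset_left
  have hIntE3 : IntegrableOn f E3 volume := hIntE.mono_set inter_subset_left
  have hsplit : E = E1 ∪ (E2 ∪ E3) := by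
    ext t
    simp only [hE1, hE2, hE3, mem_union, mem_inter_iff, mem_setOf_eq]
    constructor
    · intro ht
      rcases lt_or_ge (|t - x|) 1 with h | h
      · exact Or.inl ⟨ht, h⟩
      · rcases lt_or_ge (|t - x|) 40 with h' | h'
        · exact Or.inr (Or.inl ⟨ht, h, h'⟩)
        · exact Or.inr (Or.inr ⟨ht, h'⟩)
    · rintro (h | h | h) <;> exact h.1
  have hdisj1 : Disjoint E1 (E2 ∪ E3) := by
    rw [disjoint_union_right]
    constructor <;> rw [disjoint_iff_inter_eq_empty] <;> ext t <;>
      simp only [hE1, hE2, hE3, mem_inter_iff, mem_setOf_eq, mem_empty_iff_false, iff_false] <;>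
      rintro ⟨⟨-, h1⟩, ⟨-, h2⟩⟩ <;> first
      | linarith [h2.1]
      | linarith [h2]
  have hdisj2 : Disjoint E2 E3 := by
    rw [disjoint_iff_inter_eq_empty]; ext t
    simp only [hE2, hE3, mem_inter_iff, mem_setOf_eq, mem_empty_iff_false, iff_false]
    rintro ⟨⟨-, -, h1⟩, -, h2⟩; linarith
  have hIeq : ∫ t in E, f t = (∫ t in E1, f t) + ((∫ t in E2, f t) + (∫ t in E3, f t)) := by
    rw [hsplit]
    rw [setIntegral_union hdisj1 (hmE2.union hmE3) hIntE1 (hIntE2.union hIntE3)]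
    rw [setIntegral_union hdisj2 hmE3 hIntE2 hIntE3]
  -- piece E1
  have hE1sub : E1 ⊆ Icc (x - 1) (x + 1) := by
    intro t ht
    have := ht.2
    simp only [mem_setOf_eq, abs_lt] at this
    exact ⟨by linarith [this.1], by linarith [this.2]⟩
  have hb1 : -(8:ℝ) ≤ ∫ t in E1, f t := by
    have step1 : ∫ t in E1, -(2 * |t - x| ^ (-2⁻¹ : ℝ)) ≤ ∫ t in E1, f t := by
      refine setIntegral_mono_on ?_ ?_ hmE1 ?_
      · exact (IntegrableOn.mono_set (intOn_rpow_abs x 1 one_pos.le) hE1sub).const_mul 2 |>.neg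
      · exact hIntE1
      · intro t _; exact log_abs_ge (t - x)
    have step2 : ∫ t in E1, 2 * |t - x| ^ (-2⁻¹ : ℝ) ≤
        ∫ t in Icc (x-1) (x+1), 2 * |t - x| ^ (-2⁻¹ : ℝ) := by
      refine setIntegral_mono_set ((intOn_rpow_abs x 1 one_pos.le).const_mul 2) ?_
        (HasSubset.Subset.eventuallyLE hE1sub)
      refine Filter.Eventually.of_forall ?_
      intro t
      positivity
    rw [integral_neg] at step1
    have := rpow_ball_integral x
    linarith
  -- piece E2
  have hb2 : 0 ≤ ∫ t in E2, f t := by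
    refine setIntegral_nonneg hmE2 ?_
    intro t ht
    exact Real.log_nonneg ht.2.1
  -- piece E3
  have hvol3 : 10 ≤ (volume E3).toReal := by
    have hsubE : E ⊆ E3 ∪ Ioo (x - 40) (x + 40) := by
      intro t ht
      rcases le_or_gt 40 (|t - x|) with h | h
      · exact Or.inl ⟨ht, h⟩
      · right
        rw [abs_lt] at h
        exact ⟨by linarith [h.1], by linarith [h.2]⟩
    have h1 : volume E ≤ volume E3 + volume (Ioo (x - 40) (x + 40)) :=
      le_trans (measure_mono hsubE) (measure_union_le _ _)
    have h2 : volume (Ioo (x - 40) (x + 40)) = ENNReal.ofReal 80 := by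
      rw [Real.volume_Ioo]; norm_num
    have hfin3 : volume E3 ≠ ⊤ := by
      exact ne_of_lt (lt_of_le_of_lt
        (measure_mono (show E3 ⊆ Icc (0:ℝ) 100 from fun t ht => hsub ht.1)) measure_Icc_lt_top)
    have h3 : (volume E).toReal ≤ (volume E3).toReal + 80 := by
      calc (volume E).toReal ≤ (volume E3 + ENNReal.ofReal 80).toReal := by
            refine ENNReal.toReal_mono ?_ (h2 ▸ h1)
            simp [hfin3]
          _ = (volume E3).toReal + 80 := by
            rw [ENNReal.toReal_add hfin3 ENNReal.ofReal_ne_top]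
            norm_num
    linarith
  have hb3 : 10 ≤ ∫ t in E3, f t := by
    have hfin3 : volume E3 ≠ ⊤ := by
      exact ne_of_lt (lt_of_le_of_lt
        (measure_mono (show E3 ⊆ Icc (0:ℝ) 100 from fun t ht => hsub ht.1)) measure_Icc_lt_top)
    have hlog40 : 1 ≤ Real.log 40 := by
      rw [Real.le_log_iff_exp_le (by norm_num)]
      have := Real.exp_one_lt_d9
      linarith
    have key : Real.log 40 * (volume E3).toReal ≤ ∫ t in E3, f t := by
      refine setIntegral_ge_of_const_le_real hmE3 hfin3 ?_ hIntE3
      intro t ht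
      refine Real.log_le_log (by norm_num) ht.2
    nlinarith
  linarith [hIeq, hb1, hb2, hb3]

lemma listlem (E : Set ℝ) (hme : MeasurableSet E) (hsub : E ⊆ Icc 0 100)
    (hvol : 90 ≤ (volume E).toReal) (lx : List ℝ) :
    IntegrableOn (fun t => (lx.map (fun x => Real.log |t - x|)).sum) E volume ∧
      (lx.length : ℝ) ≤ ∫ t in E, (lx.map (fun x => Real.log |t - x|)).sum := by
  induction lx with
  | nil =>
    constructor
    · simpa using (integrable_zero ℝ ℝ (volume.restrict E))
    · simp
  | cons x xs ih =>
    have hx : IntegrableOn (fun t => Real.log |t - x|) E volume :=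
      (integrableOn_log_abs x 0 100).mono_set hsub
    have hadd : IntegrableOn
        (fun t => Real.log |t - x| + (xs.map (fun y => Real.log |t - y|)).sum) E volume :=
      hx.add ih.1
    constructor
    · simpa using hadd
    · have heq : ∫ t in E, ((x :: xs).map (fun y => Real.log |t - y|)).sum
          = (∫ t in E, Real.log |t - x|) + ∫ t in E, (xs.map (fun y => Real.log |t - y|)).sum := by
        simp only [List.map_cons, List.sum_cons]
        exact integral_add hx ih.1
      rw [heq]
      have h1 := corelem x E hme hsub hvol
      have h2 := ih.2
      simp only [List.length_cons]
      push_cast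
      linarith

lemma sum_log_eq (t : ℝ) : ∀ l : List ℝ, (∀ x ∈ l, t - x ≠ 0) →
    (l.map (fun x => Real.log |t - x|)).sum = Real.log ((l.map (fun x => |t - x|)).prod) := by
  intro l
  induction l with
  | nil => simp
  | cons a as ih =>
    intro h
    have ha : |t - a| ≠ 0 := fun hc => h a List.mem_cons_self (abs_eq_zero.mp hc)
    have hprod : (as.map (fun x => |t - x|)).prod ≠ 0 := by
      refine List.prod_ne_zero ?_
      intro hc
      rw [List.mem_map] at hc
      obtain ⟨x, hx, hx0⟩ := hc
      exact h x (List.mem_cons_of_mem a hx) (abs_eq_zero.mp hx0)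
    simp only [List.map_cons, List.sum_cons, List.prod_cons]
    rw [Real.log_mul ha hprod, ih (fun x hx => h x (List.mem_cons_of_mem a hx))]

lemma prod_pair_le (t : ℝ) : ∀ l : List ℂ,
    (0 ≤ (l.map (fun r => |t - r.re|)).prod) ∧
    (l.map (fun r => |t - r.re|)).prod ≤ (l.map (fun r => ‖(t:ℂ) - r‖)).prod := by
  intro l
  induction l with
  | nil => simp
  | cons a as ih =>
    simp only [List.map_cons, List.prod_cons]
    have h1 : |t - a.re| ≤ ‖(t:ℂ) - a‖ := by
      have := Complex.abs_re_le_norm ((t:ℂ) - a)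
      simpa [Complex.sub_re, Complex.ofReal_re] using this
    constructor
    · exact mul_nonneg (abs_nonneg _) ih.1
    · exact mul_le_mul h1 ih.2 ih.1 (norm_nonneg _)

lemma polylem (Q : Polynomial ℂ) (hQ : Q.Monic) (E : Set ℝ) (hme : MeasurableSet E)
    (hsub : E ⊆ Icc 0 100) (hvol : 90 ≤ (volume E).toReal)
    (M : ℝ) (hM : 1 ≤ M) (hbd : ∀ t : ℝ, t ∈ E → ‖Q.eval (t:ℂ)‖ ≤ M) :
    (Q.natDegree : ℝ) ≤ 100 * Real.log M := by
  classical
  set lr : List ℂ := Q.roots.toList with hlrdef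
  have hlr : (↑lr : Multiset ℂ) = Q.roots := Q.roots.coe_toList
  have hlen : lr.length = Q.natDegree := by
    rw [hlrdef, Multiset.length_toList]
    exact (Polynomial.splits_iff_card_roots.mp (IsAlgClosed.splits Q))
  have habs : ∀ t : ℝ, ‖Q.eval (t:ℂ)‖ =
      (lr.map (fun r => ‖(t:ℂ) - r‖)).prod := by
    intro t
    have hQeq : Q = (Q.roots.map fun a => Polynomial.X - Polynomial.C a).prod :=
      (IsAlgClosed.splits Q).eq_prod_roots_of_monic hQ
    conv_lhs => rw [hQeq]
    rw [← hlr]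
    rw [Multiset.map_coe, Multiset.prod_coe]
    rw [Polynomial.eval_list_prod]
    rw [List.norm_prod]
    simp [List.map_map, Function.comp_def]
  set lx : List ℝ := lr.map Complex.re with hlxdef
  have hlxlen : lx.length = Q.natDegree := by rw [hlxdef, List.length_map, hlen]
  -- the null set of points hitting real parts of roots
  set N : Set ℝ := {t : ℝ | ∃ x ∈ lx, t - x = 0} with hN
  have hNfin : N.Finite := by
    have : N ⊆ (fun x => x) '' {x | x ∈ lx} := by
      intro t ht
      obtain ⟨x, hx, hx0⟩ := ht
      exact ⟨x, hx, by linarith [sub_eq_zero.mp hx0]⟩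
    exact Finite.subset ((List.finite_toSet lx).image _) this
  have hNnull : volume N = 0 := hNfin.measure_zero _
  -- a.e. pointwise bound on E
  have haebound : ∀ᵐ t : ℝ, t ∈ E →
      (lx.map (fun x => Real.log |t - x|)).sum ≤ Real.log M := by
    have hae : ∀ᵐ t : ℝ, t ∉ N := by
      rw [MeasureTheory.ae_iff]
      exact measure_mono_null (fun t ht => by simpa using ht) hNnull
    filter_upwards [hae] with t htN htE
    have hne : ∀ x ∈ lx, t - x ≠ 0 := by
      intro x hx hc
      exact htN ⟨x, hx, hc⟩
    rw [sum_log_eq t lx hne]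
    have hpos : 0 < (lx.map (fun x => |t - x|)).prod := by
      refine List.prod_pos ?_
      intro a ha
      rw [List.mem_map] at ha
      obtain ⟨x, hx, rfl⟩ := ha
      exact abs_pos.mpr (hne x hx)
    refine Real.log_le_log hpos ?_
    have hle := (prod_pair_le t lr).2
    have : (lx.map (fun x => |t - x|)).prod = (lr.map (fun r => |t - r.re|)).prod := by
      rw [hlxdef, List.map_map]
      rfl
    rw [this]
    calc (lr.map (fun r => |t - r.re|)).prod
        ≤ (lr.map (fun r => ‖(t:ℂ) - r‖)).prod := hle
      _ = ‖Q.eval (t:ℂ)‖ := (habs t).symm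
      _ ≤ M := hbd t htE
  obtain ⟨hint, hlow⟩ := listlem E hme hsub hvol lx
  have hup : ∫ t in E, (lx.map (fun x => Real.log |t - x|)).sum ≤ ∫ t in E, (fun _ => Real.log M) t := by
    refine setIntegral_mono_on_ae hint (integrableOn_const (ne_of_lt ?_)) hme haebound
    exact lt_of_le_of_lt (measure_mono hsub) measure_Icc_lt_top
  have hconst : ∫ t in E, (fun _ => Real.log M) t = (volume E).toReal * Real.log M := by
    rw [setIntegral_const, smul_eq_mul, measureReal_def]
  have hvol100 : (volume E).toReal ≤ 100 := by
    have h1 : volume E ≤ volume (Icc (0:ℝ) 100) := measure_mono hsub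
    have h2 : volume (Icc (0:ℝ) 100) = ENNReal.ofReal 100 := by
      rw [Real.volume_Icc]; norm_num
    calc (volume E).toReal ≤ (ENNReal.ofReal 100).toReal :=
          ENNReal.toReal_mono (by simp) (h2 ▸ h1)
      _ = 100 := by simp
  have hlogM : 0 ≤ Real.log M := Real.log_nonneg hM
  have : (volume E).toReal * Real.log M ≤ 100 * Real.log M := by nlinarith
  rw [← hlxlen]
  calc (lx.length : ℝ) ≤ ∫ t in E, (lx.map (fun x => Real.log |t - x|)).sum := hlow
    _ ≤ _ := hup
    _ = _ := hconst
    _ ≤ _ := this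

/-- Let `(P_n)` be a sequence of monic polynomials in `ℂ[X]` whose degrees tend to infinity, and
let `ξ₁, …, ξ_m ∈ ℂ`. Then there exists `ξ ∈ ℂ`, transcendental over `ℚ(ξ₁, …, ξ_m)`, such that
`(|P_n(ξ)|)_n` is unbounded. -/
theorem stmt_11 (P : ℕ → Polynomial ℂ) (hmonic : ∀ n, (P n).Monic)
    (hdeg : Filter.Tendsto (fun n => (P n).natDegree) Filter.atTop Filter.atTop)
    (m : ℕ) (ξ : Fin m → ℂ) :
    ∃ z : ℂ, Transcendental ↥(IntermediateField.adjoin ℚ (Set.range ξ)) z ∧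
      ∀ M : ℝ, ∃ n, M < ‖(P n).eval z‖ := by
  classical
  set K := IntermediateField.adjoin ℚ (Set.range ξ) with hK
  have hKc : Countable ↥K := by
    have h := IntermediateField.cardinalMk_adjoin_le ℚ (Set.range ξ)
    rw [← Cardinal.mk_le_aleph0_iff]
    refine h.trans ?_
    simp only [sup_le_iff]
    exact ⟨⟨Cardinal.mk_le_aleph0, Cardinal.mk_le_aleph0⟩, le_rfl⟩
  have hAc : {z : ℂ | IsAlgebraic ↥K z}.Countable := countable_alg ↥K
  -- bad sets
  set Bad : ℕ → Set ℝ := fun M =>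
    Icc 0 100 ∩ ⋂ n, {t : ℝ | ‖(P n).eval (t : ℂ)‖ ≤ (M : ℝ)} with hBad
  have hcont : ∀ n, Continuous fun t : ℝ => ‖(P n).eval (t : ℂ)‖ := by
    intro n
    exact continuous_norm.comp ((P n).continuous.comp Complex.continuous_ofReal)
  have hBadMeas : ∀ M : ℕ, MeasurableSet (Bad M) := by
    intro M
    refine measurableSet_Icc.inter (MeasurableSet.iInter fun n => ?_)
    exact (hcont n).measurable measurableSet_Iic
  have hBadVol : ∀ M : ℕ, volume (Bad M) ≤ ENNReal.ofReal 90 := by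
    intro M
    by_contra hcon
    push_neg at hcon
    have hfin : volume (Bad M) ≠ ⊤ :=
      ne_of_lt (lt_of_le_of_lt (measure_mono inter_subset_left) measure_Icc_lt_top)
    have hvol90 : 90 ≤ (volume (Bad M)).toReal := by
      have := ENNReal.toReal_mono hfin hcon.le
      simpa using this
    set D : ℕ := ⌈100 * Real.log ((M : ℝ) + 1)⌉₊ + 1 with hD
    obtain ⟨n, hn⟩ := (hdeg.eventually (Filter.eventually_ge_atTop D)).exists
    have hbd : ∀ t : ℝ, t ∈ Bad M → ‖(P n).eval (t : ℂ)‖ ≤ (M : ℝ) + 1 := by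
      intro t ht
      have := ht.2
      rw [mem_iInter] at this
      exact le_trans (this n) (by linarith)
    have hply := polylem (P n) (hmonic n) (Bad M) (hBadMeas M) inter_subset_left hvol90
      ((M : ℝ) + 1) (by have : (0:ℝ) ≤ (M:ℝ) := Nat.cast_nonneg M; linarith) hbd
    have hceil : 100 * Real.log ((M : ℝ) + 1) ≤ (⌈100 * Real.log ((M : ℝ) + 1)⌉₊ : ℝ) :=
      Nat.le_ceil _
    have hDn : (D : ℝ) ≤ ((P n).natDegree : ℝ) := by exact_mod_cast hn
    rw [hD] at hDn
    push_cast at hDn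
    linarith
  have hmono : Monotone Bad := by
    intro M M' hMM t ht
    obtain ⟨h1, h2⟩ := ht
    refine ⟨h1, ?_⟩
    rw [mem_iInter] at h2 ⊢
    intro n
    have h3 : ‖Polynomial.eval (↑t) (P n)‖ ≤ (M : ℝ) := h2 n
    have h4 : (M : ℝ) ≤ (M' : ℝ) := Nat.cast_le.mpr hMM
    exact le_trans h3 h4
  have hUnionVol : volume (⋃ M : ℕ, Bad M) ≤ ENNReal.ofReal 90 := by
    rw [(hmono.directed_le).measure_iUnion]
    exact iSup_le hBadVol
  set AlgR : Set ℝ := (fun t : ℝ => (t : ℂ)) ⁻¹' {z : ℂ | IsAlgebraic ↥K z} with hAlgR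
  have hAlgRc : AlgR.Countable := hAc.preimage Complex.ofReal_injective
  have hAlgR0 : volume AlgR = 0 := hAlgRc.measure_zero _
  -- find a good point
  have hnotsub : ¬ (Icc (0:ℝ) 100 ⊆ (⋃ M : ℕ, Bad M) ∪ AlgR) := by
    intro hsub
    have h1 : volume (Icc (0:ℝ) 100) ≤ volume ((⋃ M : ℕ, Bad M) ∪ AlgR) := measure_mono hsub
    have h2 : volume ((⋃ M : ℕ, Bad M) ∪ AlgR) ≤ ENNReal.ofReal 90 := by
      refine le_trans (measure_union_le _ _) ?_
      rw [hAlgR0, add_zero]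
      exact hUnionVol
    rw [Real.volume_Icc] at h1
    have : ENNReal.ofReal 100 ≤ ENNReal.ofReal 90 := by
      refine le_trans (le_of_eq ?_) (h1.trans h2)
      norm_num
    rw [ENNReal.ofReal_le_ofReal_iff (by norm_num)] at this
    linarith
  obtain ⟨t, htIcc, htnot⟩ := not_subset.mp hnotsub
  refine ⟨(t : ℂ), ?_, ?_⟩
  · intro halg
    exact htnot (Or.inr halg)
  · intro M
    have htBad : ∀ M' : ℕ, t ∉ Bad M' := fun M' hmem =>
      htnot (Or.inl (mem_iUnion.mpr ⟨M', hmem⟩))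
    set M' : ℕ := ⌈max M 0⌉₊ with hM'
    have := htBad M'
    rw [hBad] at this
    simp only [mem_inter_iff, mem_iInter, mem_setOf_eq, not_and, not_forall] at this
    obtain ⟨n, hn⟩ := this htIcc
    push_neg at hn
    refine ⟨n, lt_of_le_of_lt ?_ hn⟩
    calc M ≤ max M 0 := le_max_left _ _
      _ ≤ (⌈max M 0⌉₊ : ℝ) := Nat.le_ceil _
end

section
/- Let (P_n)_{n∈ℕ} be a sequence of pairwise distinct polynomials in ℤ[X₁, …, X_m] whose total degrees are uniformly bounded (sup_n deg P_n < ∞). Then there exist complex numbers ξ₁, …, ξ_m, algebraically independent over ℚ, such that the sequence (|P_n(ξ₁, …, ξ_m)|)_n is unbounded in ℝ. -/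
open MvPolynomial

lemma lemA {m : ℕ} {p : MvPolynomial (Fin m) ℂ} {U : Set (Fin m → ℂ)}
    (hU : IsOpen U) (hne : U.Nonempty) (hz : ∀ ξ ∈ U, eval ξ p = 0) : p = 0 := by
  obtain ⟨ξ₀, hξ₀⟩ := hne
  have han : AnalyticOnNhd ℂ (fun ξ : Fin m → ℂ => eval ξ p) Set.univ :=
    AnalyticOnNhd.eval_mvPolynomial p
  have hev : (fun ξ : Fin m → ℂ => eval ξ p) =ᶠ[nhds ξ₀] 0 := by
    filter_upwards [hU.mem_nhds hξ₀] with x hx using hz x hx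
  have := han.eqOn_zero_of_preconnected_of_eventuallyEq_zero
    (isPreconnected_univ) (Set.mem_univ ξ₀) hev
  refine MvPolynomial.funext fun x => ?_
  simpa using this (Set.mem_univ x)

lemma coeff_vanish {R : Type*} [CommSemiring R] {m D : ℕ} {p : MvPolynomial (Fin m) R}
    (hp : p.totalDegree ≤ D) {σ : Fin m →₀ ℕ} {i : Fin m} (h : D < σ i) :
    MvPolynomial.coeff σ p = 0 := by
  refine coeff_eq_zero_of_totalDegree_lt (lt_of_le_of_lt hp ?_)
  calc D < σ i := h
    _ ≤ ∑ j ∈ σ.support, σ j :=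
      Finset.single_le_sum (fun _ _ => Nat.zero_le _)
        (Finsupp.mem_support_iff.2 (by omega))

lemma lemB {m D : ℕ} (P : ℕ → MvPolynomial (Fin m) ℤ) (hinj : Function.Injective P)
    (hdeg : ∀ n, (P n).totalDegree ≤ D) (M : ℝ) :
    Dense {ξ : Fin m → ℂ | ∃ n, M < ‖MvPolynomial.aeval ξ (P n)‖} := by
  rw [dense_iff_inter_open]
  rintro U hU ⟨ξ₀, hξ₀⟩
  by_contra hcon
  rw [Set.not_nonempty_iff_eq_empty] at hcon
  have hbound : ∀ ξ ∈ U, ∀ n, ‖MvPolynomial.aeval ξ (P n)‖ ≤ M := by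
    intro ξ hξ n
    by_contra h
    exact Set.eq_empty_iff_forall_notMem.1 hcon ξ ⟨hξ, n, by linarith [not_le.1 h]⟩
  -- exponent encoding
  set e : (Fin m → Fin (D+1)) → (Fin m →₀ ℕ) :=
    fun t => Finsupp.equivFunOnFinite.symm (fun i => (t i : ℕ)) with he
  have he_apply : ∀ t i, (e t) i = (t i : ℕ) := by
    intro t i; simp [he]
  have he_inj : Function.Injective e := by
    intro a b hab
    funext i
    have : ((a i : ℕ) : ℕ) = (b i : ℕ) := by
      rw [← he_apply a i, ← he_apply b i, hab]
    exact Fin.ext this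
  -- coefficient vectors
  set c : ℕ → (Fin m → Fin (D+1)) → ℤ :=
    fun n t => MvPolynomial.coeff (e t) (P n) with hc
  have hcinj : Function.Injective c := by
    intro a b hab
    apply hinj
    apply MvPolynomial.ext
    intro σ
    by_cases hσ : ∀ i, σ i ≤ D
    · have : σ = e (fun i => ⟨σ i, Nat.lt_succ_of_le (hσ i)⟩) := by
        ext i; rw [he_apply]
      rw [this]
      exact congrFun hab _
    · push_neg at hσ
      obtain ⟨i, hi⟩ := hσ
      rw [coeff_vanish (hdeg a) hi, coeff_vanish (hdeg b) hi]
  -- complex coefficient vectors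
  set v : ℕ → (Fin m → Fin (D+1)) → ℂ := fun n t => ((c n t : ℤ) : ℂ) with hv
  have hnormv : ∀ n t, ‖v n t‖ = |(c n t : ℝ)| := by
    intro n t; rw [hv]; push_cast; simp [Complex.norm_intCast]
  have key : ∀ k : ℕ, ∃ j, (k : ℝ) < ‖v j‖ := by
    intro k
    by_contra hk
    push_neg at hk
    have hsub : Set.range c ⊆ Set.pi Set.univ (fun _ => Set.Icc (-(k:ℤ)) k) := by
      rintro _ ⟨j, rfl⟩ t _
      have h1 : ‖v j t‖ ≤ (k : ℝ) := le_trans (norm_le_pi_norm (v j) t) (hk j)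
      rw [hnormv] at h1
      have : |(c j t : ℝ)| ≤ (k:ℝ) := h1
      rw [abs_le] at this
      constructor <;> [exact_mod_cast this.1; exact_mod_cast this.2]
    have hfin : (Set.pi Set.univ (fun _ : Fin m → Fin (D+1) => Set.Icc (-(k:ℤ)) k)).Finite :=
      Set.Finite.pi (fun _ => Set.finite_Icc _ _)
    exact Set.infinite_range_of_injective hcinj (hfin.subset hsub)
  choose ν hν using key
  have hvpos : ∀ k, (0:ℝ) < ‖v (ν k)‖ := fun k => lt_of_le_of_lt (Nat.cast_nonneg k) (hν k)
  set w : ℕ → (Fin m → Fin (D+1)) → ℂ := fun k => (‖v (ν k)‖)⁻¹ • v (ν k) with hw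
  have hwsphere : ∀ k, w k ∈ Metric.sphere (0 : (Fin m → Fin (D+1)) → ℂ) 1 := by
    intro k
    rw [mem_sphere_zero_iff_norm, hw]
    rw [norm_smul, norm_inv, norm_norm]
    exact inv_mul_cancel₀ (ne_of_gt (lt_of_le_of_lt (Nat.cast_nonneg k) (hν k)))
  obtain ⟨wl, hwl, φ, hφmono, hφtend⟩ := (isCompact_sphere (0 : (Fin m → Fin (D+1)) → ℂ) 1).tendsto_subseq hwsphere
  -- limit polynomial
  set q : MvPolynomial (Fin m) ℂ := ∑ t, MvPolynomial.monomial (e t) (wl t) with hq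
  have hcoeffq : ∀ t, MvPolynomial.coeff (e t) q = wl t := by
    intro t₀
    rw [hq, MvPolynomial.coeff_sum]
    rw [Finset.sum_eq_single t₀]
    · simp [MvPolynomial.coeff_monomial]
    · intro t _ ht
      rw [MvPolynomial.coeff_monomial, if_neg (fun h => ht (he_inj h))]
    · simp
  have hqne : q ≠ 0 := by
    intro h0
    have : ‖wl‖ = 1 := mem_sphere_zero_iff_norm.1 hwl
    have hz : wl = 0 := by
      funext t
      rw [← hcoeffq t, h0]
      simp
    rw [hz] at this
    simp at this
  -- evaluation formula
  have heval : ∀ (ξ : Fin m → ℂ) (j : ℕ),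
      MvPolynomial.aeval ξ (P j) = ∑ t, v j t * (e t).prod (fun i k => ξ i ^ k) := by
    intro ξ j
    have hrepr : MvPolynomial.map (Int.castRingHom ℂ) (P j)
        = ∑ t, MvPolynomial.monomial (e t) (v j t) := by
      apply MvPolynomial.ext
      intro σ
      rw [MvPolynomial.coeff_sum, MvPolynomial.coeff_map]
      by_cases hσ : ∀ i, σ i ≤ D
      · set t₀ : Fin m → Fin (D+1) := fun i => ⟨σ i, Nat.lt_succ_of_le (hσ i)⟩ with ht₀
        have hσt : σ = e t₀ := by ext i; rw [he_apply]
        rw [Finset.sum_eq_single t₀]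
        · rw [MvPolynomial.coeff_monomial, if_pos hσt.symm, hσt]
          rfl
        · intro t _ ht
          rw [MvPolynomial.coeff_monomial, if_neg]
          rw [hσt]
          exact fun h => ht (he_inj h)
        · simp
      · push_neg at hσ
        obtain ⟨i, hi⟩ := hσ
        rw [coeff_vanish (hdeg j) hi]
        rw [Finset.sum_eq_zero]
        · simp
        intro t _
        rw [MvPolynomial.coeff_monomial, if_neg]
        intro h
        have := he_apply t i
        rw [h] at this
        omega
    calc MvPolynomial.aeval ξ (P j) = MvPolynomial.eval ξ (MvPolynomial.map (Int.castRingHom ℂ) (P j)) := by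
          rw [MvPolynomial.aeval_def, MvPolynomial.eval₂_eq_eval_map]
          rfl
      _ = ∑ t, v j t * (e t).prod (fun i k => ξ i ^ k) := by
          rw [hrepr, map_sum]
          exact Finset.sum_congr rfl fun t _ => MvPolynomial.eval_monomial
  -- q vanishes on U
  have hqzero : ∀ ξ ∈ U, MvPolynomial.eval ξ q = 0 := by
    intro ξ hξ
    set g : (Fin m → Fin (D+1)) → ℂ := fun t => (e t).prod (fun i k => ξ i ^ k) with hg
    set F : ((Fin m → Fin (D+1)) → ℂ) → ℂ := fun u => ∑ t, u t * g t with hF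
    have hFcont : Continuous F := by
      apply continuous_finset_sum
      intro t _
      exact (continuous_apply t).mul continuous_const
    have hFsmul : ∀ (r : ℂ) (u), F (r • u) = r * F u := by
      intro r u
      rw [hF]
      simp only [Pi.smul_apply, smul_eq_mul, Finset.mul_sum, mul_assoc]
    have hFw : ∀ k, F (w k) = (‖v (ν k)‖ : ℂ)⁻¹ * MvPolynomial.aeval ξ (P (ν k)) := by
      intro k
      rw [hw]
      have : ((‖v (ν k)‖)⁻¹ : ℝ) • v (ν k) = ((‖v (ν k)‖ : ℂ))⁻¹ • v (ν k) := by
        funext t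
        simp [Complex.ofReal_inv, Complex.real_smul]
      show F (‖v (ν k)‖⁻¹ • v (ν k)) = _
      rw [this, hFsmul, heval]
    have hlim1 : Filter.Tendsto (fun k => F (w (φ k))) Filter.atTop (nhds (F wl)) :=
      (hFcont.tendsto wl).comp hφtend
    have hRlim : Filter.Tendsto (fun k => (‖v (ν (φ k))‖)⁻¹) Filter.atTop (nhds 0) := by
      apply tendsto_inv_atTop_zero.comp
      apply Filter.tendsto_atTop_mono (fun k => (le_of_lt (hν (φ k))))
      exact Filter.tendsto_atTop_mono (fun k => Nat.cast_le.2 (hφmono.le_apply))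
        tendsto_natCast_atTop_atTop
    have hlim2 : Filter.Tendsto (fun k => ‖F (w (φ k))‖) Filter.atTop (nhds 0) := by
      apply squeeze_zero (fun k => norm_nonneg _) (g := fun k => M * (‖v (ν (φ k))‖)⁻¹)
      · intro k
        rw [hFw]
        rw [norm_mul]
        rw [norm_inv]
        rw [Complex.norm_real, norm_norm]
        rw [mul_comm]
        exact mul_le_mul_of_nonneg_right (hbound ξ hξ _) (by positivity)
      · have := hRlim.const_mul M
        rwa [mul_zero] at this
    have hlim3 : Filter.Tendsto (fun k => ‖F (w (φ k))‖) Filter.atTop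
        (nhds (‖F wl‖)) := (continuous_norm.tendsto _).comp hlim1
    have habs : ‖F wl‖ = 0 := tendsto_nhds_unique hlim3 hlim2
    have hFz : F wl = 0 := by
      rwa [norm_eq_zero] at habs
    rw [hq, map_sum]
    rw [← hFz, hF]
    exact Finset.sum_congr rfl fun t _ => MvPolynomial.eval_monomial
  exact hqne (lemA hU ⟨ξ₀, hξ₀⟩ hqzero)


instance mvCountable (m : ℕ) : Countable (MvPolynomial (Fin m) ℚ) :=
  (AddMonoidAlgebra.coeffEquiv (R := ℚ) (M := Fin m →₀ ℕ)).symm.surjective.countable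

lemma contaeval {m : ℕ} {R : Type*} [CommRing R] [Algebra R ℂ] (p : MvPolynomial (Fin m) R) :
    Continuous fun ξ : Fin m → ℂ => MvPolynomial.aeval ξ p := by
  have : (fun ξ : Fin m → ℂ => MvPolynomial.aeval ξ p)
      = fun ξ => MvPolynomial.eval ξ (MvPolynomial.map (algebraMap R ℂ) p) := by
    funext ξ; rw [MvPolynomial.aeval_def, MvPolynomial.eval₂_eq_eval_map]
  rw [this]
  exact MvPolynomial.continuous_eval (p := MvPolynomial.map (algebraMap R ℂ) p)

/-- Let `(P_n)` be a sequence of pairwise distinct polynomials in `ℤ[X₁, …, X_m]` of uniformly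
bounded total degree. Then there exist complex numbers `ξ₁, …, ξ_m`, algebraically independent
over `ℚ`, such that `(|P_n(ξ₁, …, ξ_m)|)_n` is unbounded. -/
theorem stmt_12 (m : ℕ) (P : ℕ → MvPolynomial (Fin m) ℤ)
    (hinj : Function.Injective P)
    (D : ℕ) (hdeg : ∀ n, (P n).totalDegree ≤ D) :
    ∃ ξ : Fin m → ℂ, AlgebraicIndependent ℚ ξ ∧
      ∀ M : ℝ, ∃ n, M < ‖MvPolynomial.aeval ξ (P n)‖ := by
  classical
  set ι : Type := ℕ ⊕ {q : MvPolynomial (Fin m) ℚ // q ≠ 0} with hι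
  set f : ι → Set (Fin m → ℂ) := fun i =>
    Sum.rec (fun k => {ξ | ∃ n, (k : ℝ) < ‖MvPolynomial.aeval ξ (P n)‖})
      (fun q => {ξ | MvPolynomial.aeval ξ (q : MvPolynomial (Fin m) ℚ) ≠ 0}) i with hf
  have hopen : ∀ i, IsOpen (f i) := by
    rintro (k | q)
    · refine isOpen_iff_forall_mem_open.2 ?_
      rintro ξ ⟨n, hn⟩
      refine ⟨{ξ | (k : ℝ) < ‖MvPolynomial.aeval ξ (P n)‖}, fun x hx => ⟨n, hx⟩, ?_, hn⟩
      exact isOpen_lt continuous_const (continuous_norm.comp (contaeval (P n)))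
    · exact isOpen_ne_fun (contaeval _) continuous_const
  have hdense : ∀ i, Dense (f i) := by
    rintro (k | q)
    · exact lemB P hinj hdeg (k : ℝ)
    · rw [dense_iff_inter_open]
      rintro U hU hUne
      by_contra hcon
      rw [Set.not_nonempty_iff_eq_empty] at hcon
      have hz : ∀ ξ ∈ U, MvPolynomial.eval ξ (MvPolynomial.map (algebraMap ℚ ℂ) (q : MvPolynomial (Fin m) ℚ)) = 0 := by
        intro ξ hξ
        have h1 : ξ ∉ U ∩ f (Sum.inr q) := by rw [hcon]; exact Set.notMem_empty ξ
        have h2 : MvPolynomial.aeval ξ (q : MvPolynomial (Fin m) ℚ) = 0 := by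
          by_contra h3
          exact h1 ⟨hξ, h3⟩
        rwa [MvPolynomial.aeval_def, MvPolynomial.eval₂_eq_eval_map] at h2
      have := lemA hU hUne hz
      have hqz : (q : MvPolynomial (Fin m) ℚ) = 0 :=
        MvPolynomial.map_injective (algebraMap ℚ ℂ) (algebraMap ℚ ℂ).injective
          (by rw [this, map_zero])
      exact q.2 hqz
  have hd : Dense (⋂ i, f i) := dense_iInter_of_isOpen hopen hdense
  obtain ⟨ξ, hξ⟩ := hd.nonempty
  rw [Set.mem_iInter] at hξ
  refine ⟨ξ, ?_, ?_⟩
  · rw [algebraicIndependent_iff]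
    intro p hp
    by_contra hp0
    exact (hξ (Sum.inr ⟨p, hp0⟩)) hp
  · intro M
    obtain ⟨k, hk⟩ := exists_nat_gt M
    obtain ⟨n, hn⟩ := hξ (Sum.inl k)
    exact ⟨n, lt_trans hk hn⟩
end
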